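/- Let S be a type of states, F a finite type of features, K a finite nonempty type of labels, and V a type of solution values with an irreflexive, transitive dominance relation ≻ and a combining operator ⊕. Let t : S → F → Bool → S be a transition function, g_leaf : S → K → V a leaf-cost function, g_br : S → F → V a branching-cost function, and c : S → V → Prop a state-indexed feasibility constraint; write opt_s(Θ) := nondom({v ∈ Θ | c s v}) and merge_{s,f}(Θ₁, Θ₂) := {v₁ ⊕ v₂ ⊕ g_br(s, f) | v₁ ∈ Θ₁, v₂ ∈ Θ₂}. Define the full solution sets by Θ(s, 0) := {g_leaf(s, k) | k ∈ K} and, for d > 0, Θ(s, d) := ⋃_{f ∈ F} merge_{s,f}(Θ(t s f false, d−1), Θ(t s f true, d−1)); and define the STreeD recursion by T(s, 0) := opt_s(Θ(s, 0)) and, for d > 0, T(s, d) := opt_s(⋃_{f ∈ F} merge_{s,f}(T(t s f false, d−1), T(t s f true, d−1))). Assume the per-node splitting property: for every state s, feature f, and all finite sets Θ₁, Θ₂ ⊆ V, opt_s(merge_{s,f}(Θ₁, Θ₂)) = opt_s(merge_{s,f}(opt_{t s f false}(Θ₁), opt_{t s f true}(Θ₂))). Then for every state s and every depth d ≥ 0,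 T(s, d) = opt_s(Θ(s, d)); i.e., the STreeD dynamic-programming recursion computes exactly the Pareto front of feasible solution values over all decision trees of depth at most d. (Theorem 2 of the paper.) -/

import Mathlib

/-- The nondominated elements of a set `Θ` under dominance relation `r`. -/
def nondom {V : Type*} (r : V → V → Prop) (Θ : Set V) : Set V :=
  {v ∈ Θ | ¬ ∃ v' ∈ Θ, r v' v}

/-- The optimal elements of `Θ` under the state-indexed constraint `c` at state `s`:
`opt_s(Θ) = nondom({v ∈ Θ | c s v})`. -/
def optS {S V : Type*} (r : V → V → Prop) (c : S → V → Prop) (s : S)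
    (Θ : Set V) : Set V :=
  nondom r {v ∈ Θ | c s v}

/-- `merge_{s,f}(Θ₁, Θ₂) = {v₁ ⊕ v₂ ⊕ g_br(s, f) | v₁ ∈ Θ₁, v₂ ∈ Θ₂}`. -/
def mergeSF {S F V : Type*} (op : V → V → V) (gbr : S → F → V) (s : S) (f : F)
    (Θ₁ Θ₂ : Set V) : Set V :=
  {w | ∃ v₁ ∈ Θ₁, ∃ v₂ ∈ Θ₂, w = op (op v₁ v₂) (gbr s f)}

/-- The set `Θ(s, d)` of all solution values of decision trees of depth at most `d`
rooted at state `s`. -/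
def fullSols {S F K V : Type*} (t : S → F → Bool → S) (gleaf : S → K → V)
    (op : V → V → V) (gbr : S → F → V) : ℕ → S → Set V
  | 0, s => Set.range (gleaf s)
  | d + 1, s => ⋃ f : F, mergeSF op gbr s f
      (fullSols t gleaf op gbr d (t s f false))
      (fullSols t gleaf op gbr d (t s f true))

/-- The STreeD dynamic-programming recursion `T(s, d)`. -/
def streed {S F K V : Type*} (t : S → F → Bool → S) (gleaf : S → K → V)
    (op : V → V → V) (gbr : S → F → V) (r : V → V → Prop) (c : S → V → Prop) :
    ℕ → S → Set V
  | 0, s => optS r c s (Set.range (gleaf s))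
  | d + 1, s => optS r c s (⋃ f : F, mergeSF op gbr s f
      (streed t gleaf op gbr r c d (t s f false))
      (streed t gleaf op gbr r c d (t s f true)))

section Aux
variable {S F K V : Type*}

lemma mergeSF_finite (op : V → V → V) (gbr : S → F → V) (s : S) (f : F)
    {Θ₁ Θ₂ : Set V} (h₁ : Θ₁.Finite) (h₂ : Θ₂.Finite) :
    (mergeSF op gbr s f Θ₁ Θ₂).Finite := by
  have : mergeSF op gbr s f Θ₁ Θ₂ =
      Set.image2 (fun v₁ v₂ => op (op v₁ v₂) (gbr s f)) Θ₁ Θ₂ := by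
    ext w; simp [mergeSF, Set.mem_image2, eq_comm]
  rw [this]
  exact h₁.image2 _ h₂

lemma fullSols_finite [Fintype F] [Fintype K]
    (t : S → F → Bool → S) (gleaf : S → K → V) (op : V → V → V)
    (gbr : S → F → V) : ∀ (d : ℕ) (s : S), (fullSols t gleaf op gbr d s).Finite := by
  intro d
  induction d with
  | zero => intro s; exact Set.finite_range _
  | succ d ih =>
    intro s
    exact Set.finite_iUnion fun f => mergeSF_finite op gbr s f (ih _) (ih _)

lemma exists_rmin (r : V → V → Prop) (hirr : ∀ v, ¬ r v v)
    (htrans : ∀ ⦃a b c⦄, r a b → r b c → r a c)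
    {Θ : Set V} (hfin : Θ.Finite) (hne : Θ.Nonempty) :
    ∃ w ∈ Θ, ∀ u ∈ Θ, ¬ r u w := by
  revert hne
  refine Set.Finite.induction_on (motive := fun Θ _ => Θ.Nonempty → ∃ w ∈ Θ, ∀ u ∈ Θ, ¬ r u w) _ hfin (fun hne => absurd hne (by simp)) ?_
  rintro a s - hfin ih -
  rcases s.eq_empty_or_nonempty with h | h
  · subst h; exact ⟨a, by simp, by simp [hirr]⟩
  · obtain ⟨w, hw, hmin⟩ := ih h
    by_cases haw : r a w
    · refine ⟨a, Set.mem_insert _ _, ?_⟩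
      rintro u (rfl | hu)
      · exact hirr _
      · exact fun hua => hmin u hu (htrans hua haw)
    · refine ⟨w, Set.mem_insert_of_mem _ hw, ?_⟩
      rintro u (rfl | hu)
      · exact haw
      · exact hmin u hu

lemma exists_nondom_dom (r : V → V → Prop) (hirr : ∀ v, ¬ r v v)
    (htrans : ∀ ⦃a b c⦄, r a b → r b c → r a c)
    {Θ : Set V} (hfin : Θ.Finite) {v : V} (hv : v ∈ Θ) :
    ∃ w ∈ nondom r Θ, w = v ∨ r w v := by
  set D : Set V := {w ∈ Θ | w = v ∨ r w v} with hD
  have hDfin : D.Finite := hfin.subset (Set.sep_subset _ _)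
  have hDne : D.Nonempty := ⟨v, hv, Or.inl rfl⟩
  obtain ⟨w, ⟨hwΘ, hwv⟩, hmin⟩ := exists_rmin r hirr htrans hDfin hDne
  refine ⟨w, ⟨hwΘ, ?_⟩, hwv⟩
  rintro ⟨u, huΘ, huw⟩
  have huv : u = v ∨ r u v := by
    rcases hwv with rfl | hwv
    · exact Or.inr huw
    · exact Or.inr (htrans huw hwv)
  exact hmin u ⟨huΘ, huv⟩ huw

lemma nondom_iUnion {ι : Type*} (r : V → V → Prop) (hirr : ∀ v, ¬ r v v)
    (htrans : ∀ ⦃a b c⦄, r a b → r b c → r a c)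
    (A : ι → Set V) (hfin : ∀ i, (A i).Finite) :
    nondom r (⋃ i, A i) = nondom r (⋃ i, nondom r (A i)) := by
  ext v
  constructor
  · rintro ⟨hv, hnd⟩
    obtain ⟨i, hvi⟩ := Set.mem_iUnion.mp hv
    refine ⟨Set.mem_iUnion.mpr ⟨i, hvi, ?_⟩, ?_⟩
    · rintro ⟨u, hu, huv⟩
      exact hnd ⟨u, Set.mem_iUnion.mpr ⟨i, hu⟩, huv⟩
    · rintro ⟨u, hu, huv⟩
      obtain ⟨j, huj, -⟩ := Set.mem_iUnion.mp hu
      exact hnd ⟨u, Set.mem_iUnion.mpr ⟨j, huj⟩, huv⟩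
  · rintro ⟨hv, hnd⟩
    obtain ⟨i, hvi, hvnd⟩ := Set.mem_iUnion.mp hv
    refine ⟨Set.mem_iUnion.mpr ⟨i, hvi⟩, ?_⟩
    rintro ⟨u, hu, huv⟩
    obtain ⟨j, huj⟩ := Set.mem_iUnion.mp hu
    obtain ⟨w, hwnd, hwu⟩ := exists_nondom_dom r hirr htrans (hfin j) huj
    have hwv : r w v := by
      rcases hwu with rfl | hwu
      · exact huv
      · exact htrans hwu huv
    exact hnd ⟨w, Set.mem_iUnion.mpr ⟨j, hwnd⟩, hwv⟩

lemma optS_iUnion {ι : Type*} (r : V → V → Prop) (hirr : ∀ v, ¬ r v v)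
    (htrans : ∀ ⦃a b c⦄, r a b → r b c → r a c) (c : S → V → Prop) (s : S)
    (A : ι → Set V) (hfin : ∀ i, (A i).Finite) :
    optS r c s (⋃ i, A i) = nondom r (⋃ i, optS r c s (A i)) := by
  have h1 : {v ∈ ⋃ i, A i | c s v} = ⋃ i, {v ∈ A i | c s v} := by
    ext v; simp only [Set.mem_sep_iff, Set.mem_iUnion, Set.mem_setOf_eq]; tauto
  rw [optS, h1, nondom_iUnion r hirr htrans _ (fun i => (hfin i).subset (Set.sep_subset _ _))]
  rfl

end Aux

/-- Theorem 2: if the per-node splitting property holds, then the STreeD recursion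
computes exactly the Pareto front of feasible solution values over all decision
trees of depth at most `d`. -/
theorem streed_eq_opt_fullSols {S F K V : Type*}
    [Fintype F] [Fintype K] [Nonempty K]
    (r : V → V → Prop) (hirr : ∀ v, ¬ r v v)
    (htrans : ∀ ⦃a b c⦄, r a b → r b c → r a c)
    (t : S → F → Bool → S) (gleaf : S → K → V) (op : V → V → V)
    (gbr : S → F → V) (c : S → V → Prop)
    (hsplit : ∀ (s : S) (f : F) (Θ₁ Θ₂ : Set V), Θ₁.Finite → Θ₂.Finite →
      optS r c s (mergeSF op gbr s f Θ₁ Θ₂) =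
        optS r c s (mergeSF op gbr s f
          (optS r c (t s f false) Θ₁) (optS r c (t s f true) Θ₂))) :
    ∀ (s : S) (d : ℕ),
      streed t gleaf op gbr r c d s =
        optS r c s (fullSols t gleaf op gbr d s) := by

  intro s d
  induction d generalizing s with
  | zero => rfl
  | succ d ih =>
    have hf : ∀ (s' : S), (fullSols t gleaf op gbr d s').Finite :=
      fullSols_finite t gleaf op gbr d
    have hsf : ∀ (s' : S), (streed t gleaf op gbr r c d s').Finite := by
      intro s'
      rw [ih s']
      exact ((hf s').subset (Set.sep_subset _ _)).subset (Set.sep_subset _ _)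
    have key : ∀ f : F,
        optS r c s (mergeSF op gbr s f
          (streed t gleaf op gbr r c d (t s f false))
          (streed t gleaf op gbr r c d (t s f true))) =
        optS r c s (mergeSF op gbr s f
          (fullSols t gleaf op gbr d (t s f false))
          (fullSols t gleaf op gbr d (t s f true))) := by
      intro f
      rw [hsplit s f _ _ (hf _) (hf _), ih, ih]
    show optS r c s _ = optS r c s _
    simp only [fullSols]
    rw [optS_iUnion r hirr htrans c s _
        (fun f => mergeSF_finite op gbr s f (hsf _) (hsf _)),
      optS_iUnion r hirr htrans c s _
        (fun f => mergeSF_finite op gbr s f (hf _) (hf _))]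
    exact congrArg _ (congrArg _ (funext key))
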